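/- Let k ≥ 1 and ℓ_1,...,ℓ_k, m_1,...,m_k be positive integers with 1 + ℓ_1 + ... + ℓ_k = m_1 + ... + m_k = d. Let S_i be a 1 × m_i matrix and T_i an ℓ_i × m_i matrix, and let U_k be the d × d matrix with first block row (S_1 | S_2 | ... | S_k) and below it the block-diagonal arrangement of T_1,...,T_k. (1) If there exists i_0 ∈ {1,...,k} with m_{i_0} = ℓ_{i_0} + 1 and m_j = ℓ_j for all j ≠ i_0, then det(U_k) = (-1)^{∑_{i < i_0} ℓ_i} · det(stack of S_{i_0} over T_{i_0}) · ∏_{i ≠ i_0} det(T_i). (2) Otherwise det(U_k) = 0. -/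

import Mathlib

open Finset Matrix Equiv

namespace DetBlockAux

lemma sum_blocks_lt {k : ℕ} (m : Fin k → ℕ) {i i' : Fin k} (hii : i < i') :
    (∑ j ∈ Finset.univ.filter (fun j => j < i), m j) + m i
      ≤ ∑ j ∈ Finset.univ.filter (fun j => j < i'), m j := by
  have hnot : i ∉ Finset.univ.filter (fun j => j < i) := by simp
  have hsub : insert i (Finset.univ.filter (fun j => j < i))
      ⊆ Finset.univ.filter (fun j => j < i') := by
    intro j hj
    simp only [Finset.mem_insert, Finset.mem_filter, Finset.mem_univ, true_and] at *
    rcases hj with rfl | hj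
    · exact hii
    · exact hj.trans hii
  calc (∑ j ∈ Finset.univ.filter (fun j => j < i), m j) + m i
      = ∑ j ∈ insert i (Finset.univ.filter (fun j => j < i)), m j := by
        rw [Finset.sum_insert hnot]; ring
    _ ≤ _ := Finset.sum_le_sum_of_subset hsub

lemma sum_blocks_mono {k : ℕ} (m : Fin k → ℕ) {i i' : Fin k} (hii : i ≤ i') :
    (∑ j ∈ Finset.univ.filter (fun j => j < i), m j)
      ≤ ∑ j ∈ Finset.univ.filter (fun j => j < i'), m j := by
  apply Finset.sum_le_sum_of_subset
  intro j hj
  simp only [Finset.mem_filter, Finset.mem_univ, true_and] at *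
  exact lt_of_lt_of_le hj hii

lemma aux_uniq {k : ℕ} (m : Fin k → ℕ) {i i' : Fin k} {o o' : ℕ}
    (ho : o < m i) (ho' : o' < m i')
    (h : (∑ j ∈ Finset.univ.filter (fun j => j < i), m j) + o
       = (∑ j ∈ Finset.univ.filter (fun j => j < i'), m j) + o') :
    i = i' ∧ o = o' := by
  rcases lt_trichotomy i i' with hii | rfl | hii
  · have h1 := sum_blocks_lt m hii; omega
  · exact ⟨rfl, by omega⟩
  · have h1 := sum_blocks_lt m hii; omega

lemma fiber_card {k d : ℕ} (m : Fin k → ℕ) (s : Finset (Fin d)) (hs : s.card = ∑ i, m i)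
    (cb : Fin d → Fin k) (co : Fin d → ℕ)
    (h1 : ∀ q ∈ s, co q < m (cb q))
    (h2 : ∀ q ∈ s, ∀ q' ∈ s, cb q = cb q' → co q = co q' → q = q') :
    ∀ i, ((s.filter (fun q => cb q = i)).card) = m i := by
  have hle : ∀ i : Fin k, (s.filter (fun q => cb q = i)).card ≤ m i := by
    intro i
    have : (s.filter (fun q => cb q = i)).card ≤ (Finset.range (m i)).card := by
      apply Finset.card_le_card_of_injOn co
      · intro q hq
        simp only [Finset.coe_filter, Finset.mem_coe, Finset.mem_filter, Set.mem_setOf_eq] at hq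
        simp only [Finset.coe_range, Set.mem_Iio, Finset.mem_coe, Finset.mem_range]
        have := h1 q hq.1
        rw [hq.2] at this; exact this
      · intro q hq q' hq' hco
        simp only [Finset.coe_filter, Set.mem_setOf_eq] at hq hq'
        exact h2 q hq.1 q' hq'.1 (hq.2.trans hq'.2.symm) hco
    simpa using this
  have hsum : ∑ i : Fin k, (s.filter (fun q => cb q = i)).card = ∑ i, m i := by
    rw [← hs]
    exact (Finset.card_eq_sum_card_fiberwise (fun q _ => Finset.mem_univ (cb q))).symm
  intro i
  by_contra hne
  have hlt := Finset.sum_lt_sum (fun j (_ : j ∈ Finset.univ) => hle j)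
    ⟨i, Finset.mem_univ i, lt_of_le_of_ne (hle i) hne⟩
  omega

lemma det_updateRow_finsum {n : Type*} [DecidableEq n] [Fintype n] {R : Type*} [CommRing R]
    (A : Matrix n n R) (j : n) {ι : Type*} (s : Finset ι) (v : ι → n → R) :
    (A.updateRow j (∑ i ∈ s, v i)).det = ∑ i ∈ s, (A.updateRow j (v i)).det := by
  classical
  induction s using Finset.induction with
  | empty =>
      simp only [Finset.sum_empty]
      exact Matrix.det_eq_zero_of_row_eq_zero j (fun c => by simp)
  | insert _ _ h ih =>
      rw [Finset.sum_insert h, Matrix.det_updateRow_add, ih, Finset.sum_insert h]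

lemma sigma_fin_ext {k : ℕ} {m : Fin k → ℕ} {i i' : Fin k} (o : Fin (m i)) (o' : Fin (m i'))
    (h : i = i') (h2 : (o : ℕ) = (o' : ℕ)) :
    (⟨i, o⟩ : Σ j, Fin (m j)) = ⟨i', o'⟩ := by
  subst h
  exact congrArg (Sigma.mk i) (Fin.ext h2)

lemma det_blockDiagonal'_fin {k : ℕ} {R : Type*} [CommRing R] (m : Fin k → ℕ)
    (hm : ∀ i, 0 < m i) (B : ∀ i, Matrix (Fin (m i)) (Fin (m i)) R) :
    (Matrix.blockDiagonal' B).det = ∏ i, (B i).det := by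
  have htri : (Matrix.blockDiagonal' B).BlockTriangular Sigma.fst := by
    intro x y hxy
    exact Matrix.blockDiagonal'_apply_ne B x.2 y.2 (ne_of_gt hxy)
  rw [htri.det]
  have himg : Finset.image (Sigma.fst (β := fun i => Fin (m i))) Finset.univ = Finset.univ := by
    apply Finset.eq_univ_of_forall
    intro i
    exact Finset.mem_image.mpr ⟨⟨i, ⟨0, hm i⟩⟩, Finset.mem_univ _, rfl⟩
  rw [himg]
  apply Finset.prod_congr rfl
  intro a _
  let e : Fin (m a) ≃ { x : Σ i, Fin (m i) // x.1 = a } :=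
    { toFun := fun r => ⟨⟨a, r⟩, rfl⟩
      invFun := fun x => Fin.cast (congrArg m x.2) x.1.2
      left_inv := fun r => rfl
      right_inv := by
        rintro ⟨⟨i, r⟩, h⟩
        subst h
        rfl }
  have : ((Matrix.blockDiagonal' B).toSquareBlock Sigma.fst a).submatrix e e = B a := by
    ext r c
    simp only [Matrix.submatrix_apply, Matrix.toSquareBlock_def, Matrix.of_apply]
    exact Matrix.blockDiagonal'_apply_eq B a r c
  rw [← Matrix.det_submatrix_equiv_self e, this]

end DetBlockAux

/-- determinant of the block matrix `U_k` with top block row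
`(S_1 | … | S_k)` (a single row) and block-diagonal `T_1, …, T_k` below.
Here `U : Matrix (Fin d) (Fin d) R`; the decoding functions `cb, co` (resp. `rb, ro`)
give the block index and offset of each column (resp. of each row other than row `0`),
pinned down by the hypotheses `hcol` and `hrow`. -/
theorem det_blockMatrix_one_row {R : Type*} [CommRing R] (k d : ℕ) (hk : 1 ≤ k)
    (ℓ m : Fin k → ℕ) (hℓ : ∀ i, 1 ≤ ℓ i) (hm : ∀ i, 1 ≤ m i)
    (hd1 : 1 + ∑ i, ℓ i = d) (hd2 : ∑ i, m i = d)
    (S : Fin k → ℕ → R) (T : Fin k → ℕ → ℕ → R)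
    (cb : Fin d → Fin k) (co : Fin d → ℕ)
    (rb : Fin d → Fin k) (ro : Fin d → ℕ)
    (hcol : ∀ q : Fin d, co q < m (cb q) ∧
      (q : ℕ) = (∑ i ∈ Finset.univ.filter (fun i => i < cb q), m i) + co q)
    (hrow : ∀ p : Fin d, (p : ℕ) ≠ 0 → ro p < ℓ (rb p) ∧
      (p : ℕ) = 1 + (∑ i ∈ Finset.univ.filter (fun i => i < rb p), ℓ i) + ro p)
    (U : Matrix (Fin d) (Fin d) R)
    (hU0 : ∀ p q : Fin d, (p : ℕ) = 0 → U p q = S (cb q) (co q))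
    (hU : ∀ p q : Fin d, (p : ℕ) ≠ 0 →
      U p q = if rb p = cb q then T (rb p) (ro p) (co q) else 0) :
    (∀ i0 : Fin k, (m i0 = ℓ i0 + 1 ∧ ∀ j, j ≠ i0 → m j = ℓ j) →
      U.det = (-1) ^ (∑ i ∈ Finset.univ.filter (fun i => i < i0), ℓ i) *
        Matrix.det (Matrix.of fun p q : Fin (ℓ i0 + 1) =>
          if (p : ℕ) = 0 then S i0 (q : ℕ) else T i0 ((p : ℕ) - 1) (q : ℕ)) *
        ∏ i ∈ Finset.univ.erase i0, Matrix.det (Matrix.of fun r c : Fin (ℓ i) => T i r c)) ∧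
    ((¬ ∃ i0 : Fin k, m i0 = ℓ i0 + 1 ∧ ∀ j, j ≠ i0 → m j = ℓ j) → U.det = 0) := by
  classical
  obtain ⟨d', rfl⟩ : ∃ d', d = d' + 1 := ⟨∑ i, ℓ i, by omega⟩
  set p0 : Fin (d' + 1) := ⟨0, Nat.succ_pos d'⟩ with hp0def
  have hp0 : (p0 : ℕ) = 0 := rfl
  -- fiber cardinalities
  have hcolcard : ∀ i, ((Finset.univ.filter (fun q : Fin (d' + 1) => cb q = i)).card) = m i := by
    apply DetBlockAux.fiber_card m Finset.univ (by simp [hd2]) cb co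
    · intro q _; exact (hcol q).1
    · intro q _ q' _ hcb hco
      exact Fin.ext (by rw [(hcol q).2, (hcol q').2, hcb, hco])
  have hN : (Finset.univ.filter (fun p : Fin (d' + 1) => (p : ℕ) ≠ 0))
      = Finset.univ.erase p0 := by
    ext p
    simp only [Finset.mem_filter, Finset.mem_univ, true_and, Finset.mem_erase, and_true, ne_eq]
    constructor
    · intro h hh; exact h (by rw [hh, hp0])
    · intro h hh; exact h (Fin.ext hh)
  have hrowcard : ∀ i,
      (((Finset.univ.filter (fun p : Fin (d' + 1) => (p : ℕ) ≠ 0)).filter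
        (fun p => rb p = i)).card) = ℓ i := by
    apply DetBlockAux.fiber_card ℓ _ ?_ rb ro
    · intro p hp
      simp only [Finset.mem_filter, Finset.mem_univ, true_and] at hp
      exact (hrow p hp).1
    · intro p hp p' hp' hrb hro
      simp only [Finset.mem_filter, Finset.mem_univ, true_and] at hp hp'
      exact Fin.ext (by rw [(hrow p hp).2, (hrow p' hp').2, hrb, hro])
    · rw [hN, Finset.card_erase_of_mem (Finset.mem_univ _), Finset.card_univ,
        Fintype.card_fin]
      omega
  -- the counting lemma for admissible permutations
  have hcount : ∀ σ : Equiv.Perm (Fin (d' + 1)),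
      (∀ p : Fin (d' + 1), (p : ℕ) ≠ 0 → rb p = cb (σ p)) →
      ∀ i, m i = ℓ i + (if cb (σ p0) = i then 1 else 0) := by
    intro σ hσ i
    have himg : Finset.univ.filter (fun q : Fin (d' + 1) => cb q = i)
        = Finset.image σ (Finset.univ.filter (fun p => cb (σ p) = i)) := by
      ext q
      simp only [Finset.mem_filter, Finset.mem_univ, true_and, Finset.mem_image]
      constructor
      · intro h; exact ⟨σ.symm q, by simp [h], by simp⟩
      · rintro ⟨p, hp, rfl⟩; exact hp
    have hfil : Finset.univ.filter (fun p : Fin (d' + 1) => cb (σ p) = i)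
        = (if cb (σ p0) = i then
            insert p0 ((Finset.univ.filter (fun p : Fin (d' + 1) => (p : ℕ) ≠ 0)).filter
              (fun p => rb p = i))
          else ((Finset.univ.filter (fun p : Fin (d' + 1) => (p : ℕ) ≠ 0)).filter
              (fun p => rb p = i))) := by
      ext p
      by_cases hp : (p : ℕ) = 0
      · have hpp : p = p0 := Fin.ext (by rw [hp, hp0])
        subst hpp
        by_cases hi : cb (σ p0) = i <;> simp [hi, hp0] <;> intro h <;> exact absurd (Fin.ext hp0 : p0 = 0) h
      · have hr := hσ p hp
        have hpne : p ≠ p0 := by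
          intro h; rw [h] at hp; exact hp rfl
        have hp' : p ≠ 0 := fun h => hp (by simp [h])
        by_cases hi : cb (σ p0) = i <;> simp [hi, hp, hp', hpne, ← hr]
    have hp0notmem : p0 ∉ ((Finset.univ.filter (fun p : Fin (d' + 1) => (p : ℕ) ≠ 0)).filter
        (fun p => rb p = i)) := by
      simp [hp0, (Fin.ext hp0 : p0 = 0)]
    have hc := hcolcard i
    rw [himg, Finset.card_image_of_injective _ σ.injective, hfil] at hc
    by_cases hi : cb (σ p0) = i
    · rw [if_pos hi, Finset.card_insert_of_notMem hp0notmem, hrowcard i] at hc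
      rw [if_pos hi]; omega
    · rw [if_neg hi, hrowcard i] at hc
      rw [if_neg hi]; omega
  constructor
  · -- Part 1
    rintro i0 ⟨hmi0, hmj⟩
    have hm_eq : ∀ i, m i = ℓ i + (if i = i0 then 1 else 0) := by
      intro i
      by_cases h : i = i0
      · subst h; simp [hmi0]
      · simp [h, hmj i h]
    have hL : ∀ i : Fin k, (∑ j ∈ Finset.univ.filter (fun j => j < i), m j)
        = (∑ j ∈ Finset.univ.filter (fun j => j < i), ℓ j) + (if i0 < i then 1 else 0) := by
      intro i
      calc (∑ j ∈ Finset.univ.filter (fun j => j < i), m j)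
          = ∑ j ∈ Finset.univ.filter (fun j => j < i), (ℓ j + if j = i0 then 1 else 0) :=
            Finset.sum_congr rfl (fun j _ => hm_eq j)
        _ = (∑ j ∈ Finset.univ.filter (fun j => j < i), ℓ j)
            + ∑ j ∈ Finset.univ.filter (fun j => j < i), (if j = i0 then 1 else 0) :=
            Finset.sum_add_distrib
        _ = _ := by
            rw [Finset.sum_ite_eq' (Finset.univ.filter (fun j => j < i)) i0 (fun _ => 1)]
            simp
    set L : ℕ := ∑ j ∈ Finset.univ.filter (fun j => j < i0), ℓ j with hLdef
    have hLd : L < d' + 1 := by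
      have : L ≤ ∑ j, ℓ j := Finset.sum_le_sum_of_subset (Finset.filter_subset _ _)
      omega
    set w : Fin k → Fin (d' + 1) → R := fun j q => if cb q = j then S j (co q) else 0 with hwdef
    have hU_row : U.det = ∑ j : Fin k, (U.updateRow p0 (w j)).det := by
      rw [← DetBlockAux.det_updateRow_finsum U p0 Finset.univ w]
      congr 1
      have hsum : (∑ j, w j) = U p0 := by
        funext q
        rw [hU0 p0 q hp0]
        simp only [Finset.sum_apply, hwdef]
        rw [Finset.sum_ite_eq Finset.univ (cb q) (fun j => S j (co q))]
        simp
      rw [hsum, Matrix.updateRow_eq_self]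
    rw [hU_row, Finset.sum_eq_single i0 ?_ (by simp)]
    swap
    · -- vanishing terms for j ≠ i0
      intro j _ hj
      rw [Matrix.det_apply]
      apply Finset.sum_eq_zero
      intro σ _
      by_cases hadm : ∀ p : Fin (d' + 1), (p : ℕ) ≠ 0 → rb p = cb (σ⁻¹ p)
      · by_cases hcb : cb (σ⁻¹ p0) = j
        · exfalso
          have h1 := hcount σ⁻¹ hadm j
          rw [if_pos hcb] at h1
          have h2 := hmj j hj
          omega
        · have hzero : ∏ i, (U.updateRow p0 (w j)) (σ i) i = 0 := by
            apply Finset.prod_eq_zero (Finset.mem_univ (σ⁻¹ p0))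
            rw [show σ (σ⁻¹ p0) = p0 from σ.apply_symm_apply p0, Matrix.updateRow_self]
            simp only [hwdef]
            rw [if_neg hcb]
          rw [hzero, smul_zero]
      · push_neg at hadm
        obtain ⟨p, hp, hne⟩ := hadm
        have hpne : p ≠ p0 := by
          intro h; rw [h] at hp; exact hp rfl
        have hzero : ∏ i, (U.updateRow p0 (w j)) (σ i) i = 0 := by
          apply Finset.prod_eq_zero (Finset.mem_univ (σ⁻¹ p))
          rw [show σ (σ⁻¹ p) = p from σ.apply_symm_apply p, Matrix.updateRow_ne hpne, hU p (σ⁻¹ p) hp,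
            if_neg hne]
        rw [hzero, smul_zero]
    -- the main term
    ·
      set B : ∀ i : Fin k, Matrix (Fin (m i)) (Fin (m i)) R := fun i => Matrix.of (fun r c =>
        if i = i0 then (if (r : ℕ) = 0 then S i0 (c : ℕ) else T i0 ((r : ℕ) - 1) (c : ℕ))
        else T i (r : ℕ) (c : ℕ)) with hB
      -- the column equivalence
      have hδinj : Function.Injective
          (fun q : Fin (d' + 1) => (⟨cb q, ⟨co q, (hcol q).1⟩⟩ : Σ i, Fin (m i))) := by
        intro q q' h
        have h1 : cb q = cb q' := congrArg Sigma.fst h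
        have h2 : co q = co q' := congrArg (fun x : Σ i, Fin (m i) => (x.2 : ℕ)) h
        exact Fin.ext (by rw [(hcol q).2, (hcol q').2, h1, h2])
      let δ : Fin (d' + 1) ≃ Σ i, Fin (m i) := Equiv.ofBijective _
        ((Fintype.bijective_iff_injective_and_card _).mpr
          ⟨hδinj, by simp [Fintype.card_sigma, hd2]⟩)
      have hδ : ∀ q, δ q = ⟨cb q, ⟨co q, (hcol q).1⟩⟩ := fun q => rfl
      -- the row equivalence
      have hεb : ∀ p : Fin (d' + 1), (p : ℕ) ≠ 0 →
          ro p + (if rb p = i0 then 1 else 0) < m (rb p) := by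
        intro p hp
        have h3 := (hrow p hp).1
        have h4 := hm_eq (rb p)
        by_cases hc : rb p = i0
        · rw [if_pos hc] at h4; rw [if_pos hc]; omega
        · rw [if_neg hc] at h4; rw [if_neg hc]; omega
      let εf : Fin (d' + 1) → Σ i, Fin (m i) := fun p =>
        if h : (p : ℕ) = 0 then ⟨i0, ⟨0, hm i0⟩⟩
        else ⟨rb p, ⟨ro p + (if rb p = i0 then 1 else 0), hεb p h⟩⟩
      have hεf0 : ∀ p : Fin (d' + 1), (p : ℕ) = 0 → εf p = ⟨i0, ⟨0, hm i0⟩⟩ := by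
        intro p h; exact dif_pos h
      have hεf1 : ∀ (p : Fin (d' + 1)) (h : (p : ℕ) ≠ 0),
          εf p = ⟨rb p, ⟨ro p + (if rb p = i0 then 1 else 0), hεb p h⟩⟩ := by
        intro p h; exact dif_neg h
      have hεinj : Function.Injective εf := by
        intro p p' h
        by_cases hp : (p : ℕ) = 0 <;> by_cases hp' : (p' : ℕ) = 0
        · exact Fin.ext (by rw [hp, hp'])
        · exfalso
          rw [hεf0 p hp, hεf1 p' hp'] at h
          have h1 : i0 = rb p' := congrArg Sigma.fst h
          have h2 : (0 : ℕ) = ro p' + (if rb p' = i0 then 1 else 0) :=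
            congrArg (fun x : Σ i, Fin (m i) => (x.2 : ℕ)) h
          rw [if_pos h1.symm] at h2; omega
        · exfalso
          rw [hεf1 p hp, hεf0 p' hp'] at h
          have h1 : rb p = i0 := congrArg Sigma.fst h
          have h2 : ro p + (if rb p = i0 then 1 else 0) = (0 : ℕ) :=
            congrArg (fun x : Σ i, Fin (m i) => (x.2 : ℕ)) h
          rw [if_pos h1] at h2; omega
        · rw [hεf1 p hp, hεf1 p' hp'] at h
          have h1 : rb p = rb p' := congrArg Sigma.fst h
          have h2 : ro p + (if rb p = i0 then 1 else 0)
              = ro p' + (if rb p' = i0 then 1 else 0) :=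
            congrArg (fun x : Σ i, Fin (m i) => (x.2 : ℕ)) h
          rw [h1] at h2
          have h3 : ro p = ro p' := by omega
          exact Fin.ext (by rw [(hrow p hp).2, (hrow p' hp').2, h1, h3])
      let ε : Fin (d' + 1) ≃ Σ i, Fin (m i) := Equiv.ofBijective εf
        ((Fintype.bijective_iff_injective_and_card _).mpr
          ⟨hεinj, by simp [Fintype.card_sigma, hd2]⟩)
      have hcoe : ∀ p, ε p = εf p := fun _ => rfl
      -- entrywise identification with the block diagonal matrix
      have hent : ∀ p q, (U.updateRow p0 (w i0)) p q
          = Matrix.blockDiagonal' B (ε p) (δ q) := by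
        intro p q
        by_cases hp : (p : ℕ) = 0
        · have hpp0 : p = p0 := Fin.ext hp
          rw [hpp0, Matrix.updateRow_self, hcoe, hεf0 p0 rfl]
          by_cases hq : cb q = i0
          · have hδq : δ q = ⟨i0, ⟨co q, by rw [← hq]; exact (hcol q).1⟩⟩ :=
              (hδ q).trans (DetBlockAux.sigma_fin_ext _ _ hq rfl)
            rw [hδq, Matrix.blockDiagonal'_apply_eq]
            simp [hB, hwdef, hq]
          · rw [hδ q, Matrix.blockDiagonal'_apply_ne _ _ _ (fun hh => hq hh.symm)]
            simp [hwdef, hq]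
        · have hpne : p ≠ p0 := by
            intro h; rw [h] at hp; exact hp rfl
          rw [Matrix.updateRow_ne hpne, hU p q hp, hcoe, hεf1 p hp]
          by_cases hq : rb p = cb q
          · have hδq : δ q = ⟨rb p, ⟨co q, by rw [hq]; exact (hcol q).1⟩⟩ :=
              (hδ q).trans (DetBlockAux.sigma_fin_ext _ _ hq.symm rfl)
            rw [hδq, Matrix.blockDiagonal'_apply_eq, if_pos hq]
            by_cases hc : rb p = i0
            · simp [hB, hc]
            · simp [hB, hc]
          · rw [hδ q, Matrix.blockDiagonal'_apply_ne _ _ _ hq]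
            rw [if_neg hq]
      -- the sign permutation
      set L' : Fin (d' + 1) := ⟨L, hLd⟩ with hL'def
      have hkey : ∀ p : Fin (d' + 1), ε (L'.cycleRange p) = δ p := by
        intro p
        rcases lt_trichotomy p L' with hlt | heq | hgt
        · rw [Fin.cycleRange_of_lt hlt]
          have hval : ((p + 1 : Fin (d' + 1)) : ℕ) = (p : ℕ) + 1 :=
            Fin.val_add_one_of_lt (lt_of_lt_of_le hlt (Fin.le_last _))
          have hplt : (p : ℕ) < L := hlt
          have hcb : cb p < i0 := by
            by_contra hcbn
            push_neg at hcbn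
            have h1 := DetBlockAux.sum_blocks_mono m hcbn
            have h2 := (hcol p).2
            have h3 := hL i0
            rw [if_neg (lt_irrefl i0)] at h3
            omega
          have hsum : (∑ j ∈ Finset.univ.filter (fun j => j < cb p), m j)
              = ∑ j ∈ Finset.univ.filter (fun j => j < cb p), ℓ j := by
            have h4 := hL (cb p)
            rw [if_neg (lt_asymm hcb)] at h4
            omega
          have hcop : co p < ℓ (cb p) := by
            have h5 := hm_eq (cb p)
            rw [if_neg (ne_of_lt hcb)] at h5
            have h6 := (hcol p).1
            omega
          have hne1 : ((p + 1 : Fin (d' + 1)) : ℕ) ≠ 0 := by omega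
          have hr := hrow (p + 1) hne1
          have huniq := DetBlockAux.aux_uniq ℓ hr.1 hcop (by
            have h7 := hr.2
            have h8 := (hcol p).2
            omega)
          rw [hcoe, hεf1 _ hne1, hδ p]
          apply DetBlockAux.sigma_fin_ext _ _ huniq.1
          have hne2 : rb (p + 1) ≠ i0 := by
            rw [huniq.1]; exact ne_of_lt hcb
          have h9 := huniq.2
          have hfin : ro (p + 1) + (if rb (p + 1) = i0 then 1 else 0) = co p := by
            rw [if_neg hne2]; omega
          exact hfin
        · subst heq
          rw [Fin.cycleRange_self]
          have h0 : ((0 : Fin (d' + 1)) : ℕ) = 0 := rfl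
          rw [hcoe, hεf0 _ h0, hδ _]
          have h3 := hL i0
          rw [if_neg (lt_irrefl i0)] at h3
          have hvp : (L' : ℕ) = L := rfl
          have huniq := DetBlockAux.aux_uniq m (hcol L').1 (hm i0) (by
            have h8 := (hcol L').2
            omega)
          exact DetBlockAux.sigma_fin_ext _ _ huniq.1.symm huniq.2.symm
        · rw [Fin.cycleRange_of_gt hgt]
          have hgt' : L < (p : ℕ) := hgt
          have hpne : (p : ℕ) ≠ 0 := by omega
          have hr := hrow p hpne
          have hi0le : i0 ≤ rb p := by
            by_contra hcn
            push_neg at hcn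
            have h1 := DetBlockAux.sum_blocks_lt ℓ hcn
            have h2 := hr.1
            have h3 := hr.2
            omega
          rw [hcoe, hεf1 _ hpne, hδ p]
          rcases eq_or_lt_of_le hi0le with heqi | hlti
          · have h3 := hL i0
            rw [if_neg (lt_irrefl i0)] at h3
            have hcop1 : ro p + 1 < m i0 := by
              have h4 := hr.1
              rw [← heqi] at h4
              omega
            have huniq := DetBlockAux.aux_uniq m (hcol p).1 hcop1 (by
              have h5 := (hcol p).2
              have h6 := hr.2
              rw [← heqi] at h6
              omega)
            apply DetBlockAux.sigma_fin_ext _ _ (heqi ▸ huniq.1.symm)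
            have h9 := huniq.2
            have hfin : ro p + (if rb p = i0 then 1 else 0) = co p := by
              rw [if_pos heqi.symm]; omega
            exact hfin
          · have h4 := hL (rb p)
            rw [if_pos hlti] at h4
            have hmrb : m (rb p) = ℓ (rb p) := by
              have h5 := hm_eq (rb p)
              rw [if_neg (ne_of_gt hlti)] at h5
              omega
            have huniq := DetBlockAux.aux_uniq m (hcol p).1
              (show ro p < m (rb p) by have := hr.1; omega) (by
                have h6 := (hcol p).2
                have h7 := hr.2
                omega)
            apply DetBlockAux.sigma_fin_ext _ _ huniq.1.symm
            have h9 := huniq.2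
            have hfin : ro p + (if rb p = i0 then 1 else 0) = co p := by
              rw [if_neg (ne_of_gt hlti)]; omega
            exact hfin
      have hπ : (ε.trans δ.symm : Equiv.Perm (Fin (d' + 1))) = (L'.cycleRange)⁻¹ := by
        apply Equiv.ext
        intro q
        have h1 : (ε.trans δ.symm) (L'.cycleRange ((L'.cycleRange)⁻¹ q)) = (L'.cycleRange)⁻¹ q := by
          simp only [Equiv.trans_apply]
          rw [hkey]
          exact δ.symm_apply_apply _
        rwa [show L'.cycleRange ((L'.cycleRange)⁻¹ q) = q from (L'.cycleRange).apply_symm_apply q] at h1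
      have hsign : Equiv.Perm.sign (ε.trans δ.symm : Equiv.Perm (Fin (d' + 1))) = (-1) ^ L := by
        rw [hπ, Equiv.Perm.sign_inv, Fin.sign_cycleRange]
      -- determinant computation
      have hdet1 : (U.updateRow p0 (w i0))
          = ((Matrix.blockDiagonal' B).submatrix δ δ).submatrix (⇑(ε.trans δ.symm)) id := by
        ext p q
        rw [hent p q]
        simp only [Matrix.submatrix_apply, Equiv.trans_apply, id_eq, Equiv.apply_symm_apply]
      rw [hdet1, Matrix.det_permute, Matrix.det_submatrix_equiv_self,
        DetBlockAux.det_blockDiagonal'_fin m hm B, hsign,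
        ← Finset.mul_prod_erase Finset.univ (fun i => (B i).det) (Finset.mem_univ i0)]
      have hBi0 : (B i0).det = Matrix.det (Matrix.of fun p q : Fin (ℓ i0 + 1) =>
          if (p : ℕ) = 0 then S i0 (q : ℕ) else T i0 ((p : ℕ) - 1) (q : ℕ)) := by
        have hEq : B i0 = (Matrix.of fun p q : Fin (ℓ i0 + 1) =>
            if (p : ℕ) = 0 then S i0 (q : ℕ) else T i0 ((p : ℕ) - 1) (q : ℕ)).submatrix
            (finCongr hmi0) (finCongr hmi0) := by
          ext r c
          simp [hB, Fin.coe_cast]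
          by_cases hr : (r : ℕ) = 0
          · have hc0 : Fin.cast hmi0 r = 0 := Fin.ext hr
            rw [if_pos hr, if_pos hc0]
          · have hc0 : Fin.cast hmi0 r ≠ 0 := fun h => hr (by simpa using congrArg Fin.val h)
            rw [if_neg hr, if_neg hc0]
        rw [hEq, Matrix.det_submatrix_equiv_self]
      have hBi : ∀ i ∈ Finset.univ.erase i0,
          (B i).det = Matrix.det (Matrix.of fun r c : Fin (ℓ i) => T i r c) := by
        intro i hi
        have hii0 : i ≠ i0 := Finset.ne_of_mem_erase hi
        have hEq : B i = (Matrix.of fun r c : Fin (ℓ i) => T i r c).submatrix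
            (finCongr (hmj i hii0)) (finCongr (hmj i hii0)) := by
          ext r c
          simp [hB, hii0, Fin.coe_cast]
        rw [hEq, Matrix.det_submatrix_equiv_self]
      rw [hBi0, Finset.prod_congr rfl hBi]
      push_cast
      ring
  · -- Part 2
    intro hno
    rw [Matrix.det_apply]
    apply Finset.sum_eq_zero
    intro σ _
    by_cases hadm : ∀ p : Fin (d' + 1), (p : ℕ) ≠ 0 → rb p = cb (σ⁻¹ p)
    · exfalso
      refine hno ⟨cb (σ⁻¹ p0), ?_, ?_⟩
      · have h1 := hcount σ⁻¹ hadm (cb (σ⁻¹ p0))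
        rwa [if_pos rfl] at h1
      · intro j hj
        have h1 := hcount σ⁻¹ hadm j
        rwa [if_neg (Ne.symm hj), add_zero] at h1
    · push_neg at hadm
      obtain ⟨p, hp, hne⟩ := hadm
      have hzero : ∏ i, U (σ i) i = 0 := by
        apply Finset.prod_eq_zero (Finset.mem_univ (σ⁻¹ p))
        rw [show σ (σ⁻¹ p) = p from σ.apply_symm_apply p, hU p (σ⁻¹ p) hp, if_neg hne]
      rw [hzero, smul_zero]
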